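/- Let M be a probability distribution on n states with values sorted nonincreasingly, and let G′ be the sequence defined recursively by G′(i) = max_{1≤j≤n} (∑_{k=1}^{j} M(k) − ∑_{k=1}^{i−1} G′(k)) / j. Let C be a distribution with values sorted nonincreasingly, and suppose i′ is the earliest index with ∑_{k=1}^{i′} C(k) > ∑_{k=1}^{i′} G′(k) (so ∑_{k=1}^{i} C(k) ≤ ∑_{k=1}^{i} G′(k) for all i < i′). Let j′ be the largest maximizer of j ↦ (∑_{k=1}^{j} M(k) − ∑_{k=1}^{i′−1} G′(k))/j over j ∈ {1,…,n}, and define p̃ by p̃(1) = ∑_{ℓ=1}^{i′} G′(ℓ), p̃(k) = G′(i′) for 1 < k ≤ j′, and p̃(k) = M(k) for k > j′. Then C does not couple p̃: there is no map f from the indices of C to {1,…,n} with ∑_{j: f(j)=i} C(j) = p̃(i) for all i. -/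

import Mathlib

open Finset Real

/-- The distribution `C` couples the distribution `q` on `n` states. -/
def Couples {n : ℕ} (C : ℕ → ℝ) (q : Fin n → ℝ) : Prop :=
  ∃ f : ℕ → Fin n, ∀ i : Fin n, ∑' j : {j : ℕ // f j = i}, C j.1 = q i

/-- **Claim 5 (`C` cannot couple `p̃`).**
Let `M` be a sorted distribution on `n` states, `G'` satisfy the recursion
`G' i = max_{1≤j≤n} (∑_{k=1}^{j} M k − ∑_{k<i} G' k)/j`, and `C` be a sorted
distribution.  Suppose `i'` is the earliest index (0-indexed, prefix `range (i'+1)`)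
where the prefix sum of `C` exceeds that of `G'`, and `j' : Fin n` is the largest
maximizer of `j ↦ (∑_{k=1}^{j} M k − ∑_{k<i'} G' k)/j`.  With `p̃` defined by
`p̃ 1 = ∑_{ℓ=1}^{i'} G' ℓ`, `p̃ k = G' i'` for `1 < k ≤ j'`, `p̃ k = M k` for `k > j'`,
the distribution `C` does not couple `p̃`. -/
theorem coupling_fails_on_adversarial_distribution
    (n : ℕ) [NeZero n] (M : Fin n → ℝ)
    (hsort : Antitone M) (hpos : ∀ k, 0 ≤ M k) (hsum : ∑ k, M k = 1)
    (G' : ℕ → ℝ)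
    (hG' : ∀ i, G' i = univ.sup' univ_nonempty fun j : Fin n =>
      ((∑ k ∈ Iic j, M k) - ∑ k ∈ Finset.range i, G' k) / ((j : ℝ) + 1))
    (C : ℕ → ℝ)
    (hCsort : Antitone C) (hCpos : ∀ j, 0 ≤ C j) (hCsum : HasSum C 1)
    (i' : ℕ)
    (hviol : ∑ k ∈ Finset.range (i' + 1), G' k < ∑ k ∈ Finset.range (i' + 1), C k)
    (hfirst : ∀ i < i', ∑ k ∈ Finset.range (i + 1), C k ≤ ∑ k ∈ Finset.range (i + 1), G' k)
    (j' : Fin n)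
    (hj'max : ∀ j : Fin n,
      ((∑ k ∈ Iic j, M k) - ∑ k ∈ Finset.range i', G' k) / ((j : ℝ) + 1) ≤
        ((∑ k ∈ Iic j', M k) - ∑ k ∈ Finset.range i', G' k) / ((j' : ℝ) + 1))
    (hj'largest : ∀ j : Fin n,
      ((∑ k ∈ Iic j, M k) - ∑ k ∈ Finset.range i', G' k) / ((j : ℝ) + 1) =
        ((∑ k ∈ Iic j', M k) - ∑ k ∈ Finset.range i', G' k) / ((j' : ℝ) + 1) → j ≤ j')
    (ptld : Fin n → ℝ)
    (hptld : ∀ k : Fin n, ptld k =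
      if k = 0 then ∑ ℓ ∈ Finset.range (i' + 1), G' ℓ
      else if k ≤ j' then G' i'
      else M k) :
    ¬ Couples C ptld := by
  rintro ⟨f, hf⟩
  -- partial sums of M are at most 1
  have hP1 : ∀ j : Fin n, ∑ k ∈ Iic j, M k ≤ 1 := by
    intro j
    rw [← hsum]
    exact Finset.sum_le_sum_of_subset_of_nonneg (Finset.subset_univ _) fun k _ _ => hpos k
  -- prefix sums of G' are at most 1
  have main : ∀ i, ∑ k ∈ Finset.range i, G' k ≤ 1 := by
    intro i
    induction i with
    | zero => simp
    | succ i ih =>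
      rw [Finset.sum_range_succ]
      have hle : G' i ≤ 1 - ∑ k ∈ Finset.range i, G' k := by
        rw [hG' i]
        apply Finset.sup'_le
        intro j _
        have h1 : (0:ℝ) < (j:ℝ) + 1 := by positivity
        rw [div_le_iff₀ h1]
        have hj0 : (0:ℝ) ≤ (j:ℝ) := Nat.cast_nonneg _
        nlinarith [hP1 j, mul_nonneg (sub_nonneg.2 ih) hj0]
      linarith
  -- G' is nonnegative
  have hGnn : ∀ i, 0 ≤ G' i := by
    intro i
    have hnpos : 0 < n := Nat.pos_of_ne_zero (NeZero.ne n)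
    set jl : Fin n := ⟨n - 1, by omega⟩ with hjl
    have hjlv : (jl : ℕ) = n - 1 := rfl
    have hIic : Iic jl = Finset.univ := by
      ext k
      simp only [mem_Iic, mem_univ, iff_true, Fin.le_def, hjlv]
      have := k.isLt
      omega
    have h0 : (0:ℝ) ≤ (∑ k ∈ Iic jl, M k - ∑ k ∈ Finset.range i, G' k) / ((jl:ℝ) + 1) := by
      rw [hIic, hsum]
      have := main i
      apply div_nonneg (by linarith) (by positivity)
    refine h0.trans (le_trans (Finset.le_sup'
      (fun j : Fin n => ((∑ k ∈ Iic j, M k) - ∑ k ∈ Finset.range i, G' k) / ((j:ℝ) + 1))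
      (mem_univ jl)) (le_of_eq (hG' i).symm))
  -- prefix sums are monotone
  have hpremono : ∀ k ≤ i', ∑ l ∈ Finset.range k, G' l ≤ ∑ l ∈ Finset.range i', G' l := by
    intro k hk
    exact Finset.sum_le_sum_of_subset_of_nonneg
      (Finset.range_subset_range.2 hk) fun l _ _ => hGnn l
  -- value of G' i'
  have hval : G' i' = ((∑ k ∈ Iic j', M k) - ∑ k ∈ Finset.range i', G' k) / ((j':ℝ) + 1) := by
    rw [hG' i']
    exact le_antisymm (Finset.sup'_le _ _ fun j _ => hj'max j)
      (Finset.le_sup'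
        (fun j : Fin n => ((∑ k ∈ Iic j, M k) - ∑ k ∈ Finset.range i', G' k) / ((j:ℝ) + 1))
        (mem_univ j'))
  -- G' i' is at most G' k for k ≤ i'
  have hGmono : ∀ k ≤ i', G' i' ≤ G' k := by
    intro k hk
    rw [hval, hG' k]
    refine le_trans ?_ (Finset.le_sup'
      (fun j : Fin n => ((∑ k ∈ Iic j, M k) - ∑ k ∈ Finset.range k, G' k) / ((j:ℝ) + 1))
      (mem_univ j'))
    have := hpremono k hk
    gcongr
  -- M i < G' i' for i > j'
  have hMlt : ∀ i : Fin n, j' < i → M i < G' i' := by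
    intro i hi
    have hn : (j' : ℕ) + 1 < n := by
      have h1 : (j' : ℕ) < (i : ℕ) := hi
      have := i.isLt
      omega
    set j1 : Fin n := ⟨(j' : ℕ) + 1, hn⟩ with hj1
    have hnotmem : j1 ∉ Iic j' := by
      simp only [mem_Iic, Fin.le_def, hj1]
      omega
    have hIic1 : Iic j1 = insert j1 (Iic j') := by
      ext k
      simp only [mem_Iic, Fin.le_def, Finset.mem_insert, Fin.ext_iff, hj1]
      omega
    have hsum1 : ∑ k ∈ Iic j1, M k = M j1 + ∑ k ∈ Iic j', M k := by
      rw [hIic1, Finset.sum_insert hnotmem]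
    have hlt : ((∑ k ∈ Iic j1, M k) - ∑ k ∈ Finset.range i', G' k) / ((j1:ℝ) + 1) <
        ((∑ k ∈ Iic j', M k) - ∑ k ∈ Finset.range i', G' k) / ((j':ℝ) + 1) := by
      refine lt_of_le_of_ne (hj'max j1) fun h => ?_
      have := hj'largest j1 h
      have : (j1 : ℕ) ≤ (j' : ℕ) := this
      simp only [hj1] at this
      omega
    have hc : ((j1 : ℕ) : ℝ) = ((j' : ℕ) : ℝ) + 1 := by
      simp only [hj1]
      push_cast
      ring
    rw [hsum1, hc, div_lt_div_iff₀ (by positivity) (by positivity)] at hlt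
    have hv : (∑ k ∈ Iic j', M k) - ∑ k ∈ Finset.range i', G' k = G' i' * ((j':ℝ) + 1) := by
      rw [hval]
      field_simp
    have hx0 : (0:ℝ) ≤ ((j' : ℕ) : ℝ) := Nat.cast_nonneg _
    have hmj1 : M j1 < G' i' := by nlinarith [hv, hlt]
    have hij : j1 ≤ i := by
      simp only [Fin.le_def, hj1]
      exact hi
    exact lt_of_le_of_lt (hsort hij) hmj1
  -- ptld is at most G' i' off index 0
  have hptle : ∀ i : Fin n, i ≠ 0 → ptld i ≤ G' i' := by
    intro i hi
    rw [hptld i, if_neg hi]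
    by_cases h : i ≤ j'
    · rw [if_pos h]
    · rw [if_neg h]
      exact (hMlt i (not_le.mp h)).le
  have hSummable : Summable C := hCsum.summable
  -- each C j is at most the fiber sum
  have hCle : ∀ j : ℕ, C j ≤ ptld (f j) := by
    intro j
    rw [← hf (f j)]
    exact Summable.le_tsum (hSummable.subtype _) (⟨j, rfl⟩ : {k : ℕ // f k = f j})
      fun b _ => hCpos b.1
  by_cases hA : ∀ k ≤ i', G' i' < C k
  · -- every top index maps to 0
    have hf0 : ∀ k ≤ i', f k = 0 := by
      intro k hk
      by_contra h0
      have h1 := hptle (f k) h0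
      have h2 := hA k hk
      have h3 := hCle k
      linarith
    have h1 : ∑ k ∈ Finset.range (i' + 1), C k =
        ∑ k ∈ Finset.range (i' + 1), Set.indicator {j | f j = 0} C k := by
      refine Finset.sum_congr rfl fun k hk => ?_
      rw [Set.indicator_of_mem]
      exact hf0 k (Nat.lt_succ_iff.mp (Finset.mem_range.mp hk))
    have h2 : ∑ k ∈ Finset.range (i' + 1), Set.indicator {j | f j = 0} C k ≤
        ∑' j : ℕ, Set.indicator {j | f j = 0} C j :=
      Summable.sum_le_tsum _ (fun k _ => Set.indicator_nonneg (fun j _ => hCpos j) k)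
        (hSummable.indicator _)
    have h3 : (∑' j : ℕ, Set.indicator {j | f j = 0} C j) = ptld 0 := by
      rw [← _root_.tsum_subtype]
      exact hf 0
    have h4 : ptld 0 = ∑ l ∈ Finset.range (i' + 1), G' l := by
      rw [hptld 0, if_pos rfl]
    linarith [hviol, h1 ▸ (h2.trans_eq (h3.trans h4))]
  · push_neg at hA
    obtain ⟨a, ha, hCa⟩ := hA
    have hpref : ∑ k ∈ Finset.range a, C k ≤ ∑ k ∈ Finset.range a, G' k := by
      rcases Nat.eq_zero_or_pos a with rfl | hpos'
      · simp
      · obtain ⟨b, rfl⟩ : ∃ b, a = b + 1 := ⟨a - 1, by omega⟩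
        exact hfirst b (by omega)
    have hmid : ∑ k ∈ Finset.Ico a (i' + 1), C k ≤ ∑ k ∈ Finset.Ico a (i' + 1), G' k := by
      refine Finset.sum_le_sum fun k hk => ?_
      have hk' := Finset.mem_Ico.mp hk
      calc C k ≤ C a := hCsort hk'.1
        _ ≤ G' i' := hCa
        _ ≤ G' k := hGmono k (by omega)
    have hsplitC := Finset.sum_range_add_sum_Ico C (show a ≤ i' + 1 by omega)
    have hsplitG := Finset.sum_range_add_sum_Ico G' (show a ≤ i' + 1 by omega)
    linarith
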